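/- Let λ₁, …, λₙ ∈ C̄⁺ be linearly independent vectors in the closed positive cone of a real quadratic space of signature (1, p−1), with n ≥ 2 and Q(λ₁) > 0. Then for any A with 0 ≤ A ≤ 2 − 2/n, there exists c > 0 such that Q(t₁λ₁ + ⋯ + tₙλₙ) ≥ c · t₁^{2/n + A} · (t₂⋯tₙ)^{2/n − A/(n−1)} for all t₁, …, tₙ ∈ ℝ_{≥0}. -/

import Mathlib

open Finset

noncomputable def Wf (p : ℕ) : QuadraticForm ℝ (Fin p → ℝ) :=
  QuadraticMap.weightedSumSquares ℝ (fun i : Fin p => if (i : ℕ) = 0 then (1 : ℝ) else -1)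

section Model
variable {p : ℕ}


lemma Wval (hp : 1 ≤ p) (x : Fin p → ℝ) :
    Wf p x = x ⟨0, hp⟩ ^ 2 - ∑ i ∈ univ.erase ⟨0, hp⟩, x i ^ 2 := by
  rw [Wf, QuadraticMap.weightedSumSquares_apply]
  rw [← Finset.add_sum_erase (a := (⟨0, hp⟩ : Fin p)) _ _ (mem_univ _)]
  simp only [smul_eq_mul]
  rw [if_pos trivial]
  have : ∀ i ∈ univ.erase (⟨0, hp⟩ : Fin p),
      (if (i : ℕ) = 0 then (1:ℝ) else -1) * (x i * x i) = -(x i ^2) := by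
    intro i hi
    have : (i : ℕ) ≠ 0 := by
      simp only [mem_erase] at hi
      exact fun h => hi.1 (Fin.ext h)
    rw [if_neg this]; ring
  rw [Finset.sum_congr rfl this, Finset.sum_neg_distrib]
  ring

lemma W_nonpos (hp : 1 ≤ p) {x : Fin p → ℝ} (hx : x ⟨0, hp⟩ = 0) : Wf p x ≤ 0 := by
  rw [Wval hp, hx]
  simp only [ne_eq, zero_pow, OfNat.ofNat_ne_zero, not_false_eq_true, zero_sub, neg_nonpos]
  exact Finset.sum_nonneg fun i _ => sq_nonneg _

lemma W_zero_eq_zero (hp : 1 ≤ p) {x : Fin p → ℝ} (hx : x ⟨0, hp⟩ = 0) (hW : Wf p x = 0) :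
    x = 0 := by
  rw [Wval hp, hx] at hW
  simp only [ne_eq, zero_pow, OfNat.ofNat_ne_zero, not_false_eq_true, zero_sub,
    neg_eq_zero] at hW
  have h := (Finset.sum_eq_zero_iff_of_nonneg (fun i _ => sq_nonneg (x i))).1 hW
  funext i
  by_cases hi : i = ⟨0, hp⟩
  · rw [hi]; exact hx
  · have := h i (Finset.mem_erase.2 ⟨hi, mem_univ _⟩)
    exact pow_eq_zero_iff (n := 2) (by norm_num) |>.1 this
end Model

section Model2
variable {p : ℕ}

lemma W_continuous (p : ℕ) : Continuous (Wf p) := by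
  have h : (Wf p : (Fin p → ℝ) → ℝ) =
      fun x => ∑ i : Fin p, (if (i : ℕ) = 0 then (1:ℝ) else -1) • (x i * x i) :=
    funext fun x => QuadraticMap.weightedSumSquares_apply _ _
  rw [h]
  exact continuous_finset_sum _ fun i _ =>
    (by fun_prop)

lemma polar_pos_aux (hp : 1 ≤ p) {x y : Fin p → ℝ} (hx0 : 0 ≤ x ⟨0, hp⟩)
    (hy0 : 0 ≤ y ⟨0, hp⟩) (hWx : 0 ≤ Wf p x) (hWy : 0 ≤ Wf p y)
    (hpol : QuadraticMap.polar (Wf p) x y ≤ 0) :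
    ∃ a b : ℝ, ¬(a = 0 ∧ b = 0) ∧ a • x + b • y = 0 := by
  set x0 := x ⟨0, hp⟩ with hx0def
  set y0 := y ⟨0, hp⟩ with hy0def
  set z := x0 • y + (-y0) • x with hzdef
  have hz0 : z ⟨0, hp⟩ = 0 := by
    simp only [hzdef, Pi.add_apply, Pi.smul_apply, smul_eq_mul]
    ring
  have hWz : Wf p z = x0 ^ 2 * Wf p y + y0 ^ 2 * Wf p x
      - x0 * y0 * QuadraticMap.polar (Wf p) x y := by
    rw [hzdef]
    have h1 : Wf p (x0 • y + (-y0) • x) = Wf p (x0 • y) + Wf p ((-y0) • x)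
        + QuadraticMap.polar (Wf p) (x0 • y) ((-y0) • x) := by
      rw [QuadraticMap.polar]; ring
    rw [h1, QuadraticMap.map_smul, QuadraticMap.map_smul,
      QuadraticMap.polar_smul_left, QuadraticMap.polar_smul_right,
      QuadraticMap.polar_comm]
    simp only [smul_eq_mul]
    ring
  have hWznn : 0 ≤ Wf p z := by
    rw [hWz]
    have h1 : 0 ≤ x0 ^ 2 * Wf p y := mul_nonneg (sq_nonneg _) hWy
    have h2 : 0 ≤ y0 ^ 2 * Wf p x := mul_nonneg (sq_nonneg _) hWx
    have h3 : 0 ≤ -(x0 * y0 * QuadraticMap.polar (Wf p) x y) := by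
      rw [neg_mul_eq_mul_neg]
      exact mul_nonneg (mul_nonneg hx0 hy0) (neg_nonneg.2 hpol)
    linarith
  have hzzero : z = 0 := W_zero_eq_zero hp hz0 (le_antisymm (W_nonpos hp hz0) hWznn)
  by_cases hxz : x0 = 0
  · have hx : x = 0 := by
      refine W_zero_eq_zero hp hxz (le_antisymm (W_nonpos hp hxz) hWx)
    exact ⟨1, 0, by simp, by simp [hx]⟩
  · refine ⟨-y0, x0, fun h => hxz h.2, ?_⟩
    rw [← hzzero, hzdef]
    abel

lemma cone_facts (hp : 1 ≤ p) {u x : Fin p → ℝ} (hu0 : 0 < u ⟨0, hp⟩)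
    (hx : x ∈ closure (connectedComponentIn {v : Fin p → ℝ | 0 < Wf p v} u)) :
    0 ≤ Wf p x ∧ 0 ≤ x ⟨0, hp⟩ := by
  set S := connectedComponentIn {v : Fin p → ℝ | 0 < Wf p v} u with hS
  have hSsub : S ⊆ {v : Fin p → ℝ | 0 ≤ Wf p v ∧ 0 ≤ v ⟨0, hp⟩} := by
    intro v hv
    have hvW : 0 < Wf p v := connectedComponentIn_subset {v : Fin p → ℝ | 0 < Wf p v} u hv
    have hv0 : 0 < v ⟨0, hp⟩ := by
      rcases lt_trichotomy (v ⟨0, hp⟩) 0 with h | h | h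
      · -- IVT contradiction
        exfalso
        by_cases hu : u ∈ {v : Fin p → ℝ | 0 < Wf p v}
        · have hpre : IsPreconnected S := isPreconnected_connectedComponentIn
          have humem : u ∈ S := mem_connectedComponentIn hu
          have hcont : ContinuousOn (fun w : Fin p → ℝ => w ⟨0, hp⟩) S :=
            (continuous_apply _).continuousOn
          have h0 : (0 : ℝ) ∈ Set.Icc (v ⟨0, hp⟩) (u ⟨0, hp⟩) := ⟨le_of_lt h, le_of_lt hu0⟩
          obtain ⟨w, hwS, hw0⟩ := hpre.intermediate_value hv humem hcont h0
          have : 0 < Wf p w := connectedComponentIn_subset {v : Fin p → ℝ | 0 < Wf p v} u hwS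
          have : Wf p w ≤ 0 := W_nonpos hp hw0
          linarith
        · rw [hS, connectedComponentIn_eq_empty hu] at hv
          exact hv
      · exact absurd (W_nonpos hp h) (not_le.2 hvW)
      · exact h
    exact ⟨le_of_lt hvW, le_of_lt hv0⟩
  have hclosed : IsClosed {v : Fin p → ℝ | 0 ≤ Wf p v ∧ 0 ≤ v ⟨0, hp⟩} := by
    exact IsClosed.inter (isClosed_le continuous_const (W_continuous p))
      (isClosed_le continuous_const (continuous_apply _))
  exact closure_minimal hSsub hclosed hx

end Model2

section Transfer

variable {p : ℕ} {V : Type*} [NormedAddCommGroup V] [NormedSpace ℝ V]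
  [FiniteDimensional ℝ V]

/-- Negation as an isometry of any quadratic map. -/
noncomputable def negIsom (Q : QuadraticForm ℝ V) : QuadraticMap.IsometryEquiv Q Q :=
  { LinearEquiv.neg ℝ with map_app' := fun x => QuadraticMap.map_neg Q x }

lemma polar_transfer (Q : QuadraticForm ℝ V) (g : QuadraticMap.IsometryEquiv Q (Wf p))
    (x y : V) : QuadraticMap.polar (Wf p) (g x) (g y) = QuadraticMap.polar Q x y := by
  simp only [QuadraticMap.polar]
  rw [← map_add, g.map_app, g.map_app, g.map_app]

lemma mem_transfer (Q : QuadraticForm ℝ V) (g : QuadraticMap.IsometryEquiv Q (Wf p))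
    (v₀ : V) (hv₀ : 0 < Q v₀) {x : V}
    (hx : x ∈ closure (connectedComponentIn {v : V | 0 < Q v} v₀)) :
    g x ∈ closure (connectedComponentIn {w : Fin p → ℝ | 0 < Wf p w} (g v₀)) := by
  have hgc : Continuous (g : V → Fin p → ℝ) := by
    exact LinearMap.continuous_of_finiteDimensional (g.toLinearEquiv : V →ₗ[ℝ] (Fin p → ℝ))
  have himg : (g : V → Fin p → ℝ) '' {v : V | 0 < Q v} = {w : Fin p → ℝ | 0 < Wf p w} := by
    ext w
    constructor
    · rintro ⟨v, hv, rfl⟩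
      simpa [g.map_app] using hv
    · intro hw
      have h3 : (g : V → Fin p → ℝ) (g.toLinearEquiv.symm w) = w :=
        g.toLinearEquiv.apply_symm_apply w
      refine ⟨g.toLinearEquiv.symm w, ?_, h3⟩
      have h2 : Wf p (g (g.toLinearEquiv.symm w)) = Q (g.toLinearEquiv.symm w) := g.map_app _
      rw [h3] at h2
      show 0 < Q (g.toLinearEquiv.symm w)
      rw [← h2]
      exact hw
  have hmapsto : Set.MapsTo (g : V → Fin p → ℝ)
      (connectedComponentIn {v : V | 0 < Q v} v₀)
      (connectedComponentIn {w : Fin p → ℝ | 0 < Wf p w} (g v₀)) := by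
    intro v hv
    have := hgc.image_connectedComponentIn_subset (s := {v : V | 0 < Q v}) (a := v₀) hv₀
    rw [himg] at this
    exact this (Set.mem_image_of_mem _ hv)
  exact map_mem_closure hgc hx hmapsto

end Transfer

section Geometry

variable {p : ℕ} {V : Type*} [NormedAddCommGroup V] [NormedSpace ℝ V]
  [FiniteDimensional ℝ V]

lemma geometry_facts_aux (hp : 1 ≤ p) (Q : QuadraticForm ℝ V)
    (g : QuadraticMap.IsometryEquiv Q (Wf p)) (v₀ : V) (hv₀ : 0 < Q v₀)
    (hg0 : 0 < (g v₀) ⟨0, hp⟩) {n : ℕ} (lam : Fin n → V)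
    (hlam : ∀ i, lam i ∈ closure (connectedComponentIn {v : V | 0 < Q v} v₀))
    (hindep : LinearIndependent ℝ lam) :
    (∀ i, 0 ≤ Q (lam i)) ∧
      (∀ i j, i ≠ j → 0 < QuadraticMap.polar Q (lam i) (lam j)) := by
  have hfacts : ∀ i, 0 ≤ Wf p (g (lam i)) ∧ 0 ≤ (g (lam i)) ⟨0, hp⟩ := fun i =>
    cone_facts hp hg0 (mem_transfer Q g v₀ hv₀ (hlam i))
  constructor
  · intro i
    rw [← g.map_app]
    exact (hfacts i).1
  · intro i j hij
    by_contra hle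
    push_neg at hle
    have hpol : QuadraticMap.polar (Wf p) (g (lam i)) (g (lam j)) ≤ 0 := by
      rw [polar_transfer]; exact hle
    obtain ⟨a, b, hab, hzero⟩ :=
      polar_pos_aux hp (hfacts i).2 (hfacts j).2 (hfacts i).1 (hfacts j).1 hpol
    have hg : g (a • lam i + b • lam j) = 0 := by
      rw [map_add, map_smul, map_smul]; exact hzero
    have h0 : a • lam i + b • lam j = 0 := by
      have := g.toLinearEquiv.map_eq_zero_iff.1 hg
      exact this
    set c : Fin n → ℝ := fun k => if k = i then a else if k = j then b else 0 with hc
    have hsum : ∑ k, c k • lam k = a • lam i + b • lam j := by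
      have hptwise : ∀ k : Fin n, c k • lam k =
          (if k = i then a • lam i else 0) + (if k = j then b • lam j else 0) := by
        intro k
        by_cases hki : k = i
        · subst hki
          simp [hc, if_neg hij]
        · by_cases hkj : k = j
          · subst hkj
            simp [hc, if_neg hki]
          · simp [hc, if_neg hki, if_neg hkj]
      rw [Finset.sum_congr rfl fun k _ => hptwise k, Finset.sum_add_distrib,
        Finset.sum_ite_eq' univ i, Finset.sum_ite_eq' univ j]
      simp
    have hall := Fintype.linearIndependent_iff.1 hindep c (by rw [hsum, h0])
    have hai := hall i
    have haj := hall j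
    simp [hc, if_neg (Ne.symm hij)] at hai haj
    exact hab ⟨hai, haj⟩

lemma geometry_facts (hp : 1 ≤ p) (Q : QuadraticForm ℝ V)
    (hsig : Q.Equivalent (QuadraticMap.weightedSumSquares ℝ
      (fun i : Fin p => if (i : ℕ) = 0 then (1 : ℝ) else -1)))
    (v₀ : V) (hv₀ : 0 < Q v₀) {n : ℕ} (lam : Fin n → V)
    (hlam : ∀ i, lam i ∈ closure (connectedComponentIn {v : V | 0 < Q v} v₀))
    (hindep : LinearIndependent ℝ lam) :
    (∀ i, 0 ≤ Q (lam i)) ∧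
      (∀ i j, i ≠ j → 0 < QuadraticMap.polar Q (lam i) (lam j)) := by
  have hsig' : Q.Equivalent (Wf p) := hsig
  obtain ⟨g⟩ := hsig'
  have hWv₀ : 0 < Wf p (g v₀) := by rw [g.map_app]; exact hv₀
  have h0ne : (g v₀) ⟨0, hp⟩ ≠ 0 := by
    intro h
    exact absurd (W_nonpos hp h) (not_le.2 hWv₀)
  rcases h0ne.lt_or_gt with h | h
  · set g' := g.trans (negIsom (Wf p)) with hg'
    have hco : ∀ x : V, (g' : V → Fin p → ℝ) x = -((g : V → Fin p → ℝ) x) := fun x => rfl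
    have hg0' : 0 < (g' v₀) ⟨0, hp⟩ := by
      rw [hco]
      simp only [Pi.neg_apply]
      linarith
    exact geometry_facts_aux hp Q g' v₀ hv₀ hg0' lam hlam hindep
  · exact geometry_facts_aux hp Q g v₀ hv₀ h lam hlam hindep

end Geometry


lemma prod_offDiag' {ι M : Type*} [DecidableEq ι] [CommMonoid M] (s : Finset ι) (f : ι → M) :
    ∏ q ∈ s.offDiag, (f q.1 * f q.2) = (∏ i ∈ s, f i) ^ (2 * (s.card - 1)) := by
  have inner : ∀ i ∈ s, (∏ j ∈ s, if i ≠ j then f i * f j else 1)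
      = f i ^ (s.card - 1) * ∏ j ∈ s.erase i, f j := by
    intro i hi
    rw [← Finset.prod_filter, Finset.filter_ne, Finset.prod_mul_distrib,
      Finset.prod_const, Finset.card_erase_of_mem hi]
  have swap : ∏ i ∈ s, ∏ j ∈ s.erase i, f j = ∏ j ∈ s, ∏ i ∈ s.erase j, f j := by
    refine Finset.prod_comm' ?_
    intro i j
    simp only [Finset.mem_erase, ne_eq]
    tauto
  calc ∏ q ∈ s.offDiag, (f q.1 * f q.2)
      = ∏ i ∈ s, ∏ j ∈ s, (if i ≠ j then f i * f j else 1) := by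
        rw [show s.offDiag = (s ×ˢ s).filter (fun a => a.1 ≠ a.2) by ext x; simp [and_assoc],
          Finset.prod_filter, Finset.prod_product]
    _ = ∏ i ∈ s, (f i ^ (s.card - 1) * ∏ j ∈ s.erase i, f j) := Finset.prod_congr rfl inner
    _ = (∏ i ∈ s, f i ^ (s.card - 1)) * ∏ i ∈ s, ∏ j ∈ s.erase i, f j :=
        Finset.prod_mul_distrib
    _ = (∏ i ∈ s, f i) ^ (s.card - 1) * ∏ j ∈ s, ∏ i ∈ s.erase j, f j := by
        rw [Finset.prod_pow, swap]
    _ = (∏ i ∈ s, f i) ^ (s.card - 1) * ∏ j ∈ s, f j ^ (s.card - 1) := by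
        congr 1
        refine Finset.prod_congr rfl fun j hj => ?_
        rw [Finset.prod_const, Finset.card_erase_of_mem hj]
    _ = (∏ i ∈ s, f i) ^ (2 * (s.card - 1)) := by
        rw [Finset.prod_pow, ← pow_add, two_mul]

lemma amgm2 {A t0 t1 : ℝ} (hA0 : 0 ≤ A) (hA1 : A ≤ 1) (h0 : 0 ≤ t0) (h1 : 0 ≤ t1) :
    t0 ^ (1 + A) * t1 ^ (1 - A) ≤ t0 ^ 2 + t0 * t1 := by
  have e1 : ((t0 ^ 2) : ℝ) ^ A = t0 ^ (2 * A) := by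
    rw [← Real.rpow_natCast t0 2, ← Real.rpow_mul h0]
    norm_num
  have e2 : (t0 * t1) ^ (1 - A) = t0 ^ (1 - A) * t1 ^ (1 - A) := Real.mul_rpow h0 h1
  have key : t0 ^ (1 + A) * t1 ^ (1 - A) = (t0 ^ 2) ^ A * (t0 * t1) ^ (1 - A) := by
    rw [e1, e2, ← mul_assoc, ← Real.rpow_add' h0 (by linarith : 2 * A + (1 - A) ≠ 0)]
    norm_num [show 2 * A + (1 - A) = 1 + A by ring]
  rw [key]
  calc (t0 ^ 2) ^ A * (t0 * t1) ^ (1 - A)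
      ≤ A * t0 ^ 2 + (1 - A) * (t0 * t1) :=
        Real.geom_mean_le_arith_mean2_weighted hA0 (by linarith) (sq_nonneg t0)
          (mul_nonneg h0 h1) (by ring)
    _ ≤ t0 ^ 2 + t0 * t1 := by nlinarith [sq_nonneg t0, mul_nonneg h0 h1]

set_option maxHeartbeats 1000000 in
lemma amgm_big {m : ℕ} (hm : 1 ≤ m) {A : ℝ} (hA0 : 0 ≤ A) (hA1 : A ≤ 2 - 2 / ((m : ℝ) + 2))
    (t : Fin (m + 2) → ℝ) (ht : ∀ i, 0 ≤ t i) :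
    t 0 ^ (2 / ((m : ℝ) + 2) + A) *
      (∏ i ∈ univ.erase 0, t i) ^ (2 / ((m : ℝ) + 2) - A / ((m : ℝ) + 1))
      ≤ t 0 ^ 2 + ∑ q ∈ (univ.erase (0 : Fin (m + 2))).offDiag, t q.1 * t q.2 := by
  have hm1 : (1 : ℝ) ≤ (m : ℝ) := by exact_mod_cast hm
  set N : ℝ := (m : ℝ) + 2 with hN
  have hN0 : (0 : ℝ) < N := by positivity
  obtain ⟨α, hα⟩ : ∃ a : ℝ, a = 2 / N + A := ⟨_, rfl⟩
  have hα0 : 0 ≤ α := by rw [hα]; positivity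
  have hα2 : α ≤ 2 := by rw [hα]; linarith
  set s' : Finset (Fin (m + 2)) := univ.erase 0 with hs'
  have hcard : s'.card = m + 1 := by
    rw [hs', Finset.card_erase_of_mem (mem_univ _), Finset.card_univ, Fintype.card_fin]
    omega
  set Pr : ℝ := ∏ i ∈ s', t i with hPr
  have hPrnn : 0 ≤ Pr := Finset.prod_nonneg fun i _ => ht i
  set K : ℕ := s'.offDiag.card with hK
  have hKval : K = (m + 1) * m := by
    rw [hK, Finset.offDiag_card, hcard]
    have : (m+1)*(m+1) = (m+1)*m + (m+1) := by ring
    omega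
  have hKcast : (K : ℝ) = ((m : ℝ) + 1) * (m : ℝ) := by
    rw [hKval]; push_cast; ring
  have hKpos : (0 : ℝ) < K := by rw [hKcast]; nlinarith
  -- Step C : Pr ^ (2/(m+1)) ≤ ∑ offDiag products
  have stepC : Pr ^ (2 / ((m : ℝ) + 1)) ≤ ∑ q ∈ s'.offDiag, t q.1 * t q.2 := by
    have hgm := Real.geom_mean_le_arith_mean_weighted s'.offDiag (fun _ => 1 / (K : ℝ))
      (fun q => t q.1 * t q.2) (fun i _ => by positivity)
      (by
        rw [Finset.sum_const, ← hK, nsmul_eq_mul]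
        field_simp)
      (fun q _ => mul_nonneg (ht _) (ht _))
    have hlhs : (∏ q ∈ s'.offDiag, (t q.1 * t q.2) ^ (1 / (K : ℝ)))
        = Pr ^ (2 / ((m : ℝ) + 1)) := by
      rw [Real.finset_prod_rpow _ _ (fun q _ => mul_nonneg (ht _) (ht _)),
        prod_offDiag' s' t, hcard]
      rw [← hPr, ← Real.rpow_natCast Pr (2 * (m + 1 - 1)), ← Real.rpow_mul hPrnn]
      congr 1
      have : (m + 1 - 1 : ℕ) = m := by omega
      rw [this, hKcast]
      push_cast
      have h2 : ((m : ℝ) + 1) ≠ 0 := by positivity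
      have h1 : (m : ℝ) ≠ 0 := by positivity
      field_simp
    have hrhs : ∑ q ∈ s'.offDiag, (1 / (K : ℝ)) * (t q.1 * t q.2)
        ≤ ∑ q ∈ s'.offDiag, t q.1 * t q.2 := by
      refine Finset.sum_le_sum fun q _ => ?_
      have hz : 0 ≤ t q.1 * t q.2 := mul_nonneg (ht _) (ht _)
      have h1K : 1 / (K : ℝ) ≤ 1 := by
        rw [div_le_one hKpos]
        rw [hKcast]; nlinarith
      nlinarith
    rw [hlhs] at hgm
    exact le_trans hgm hrhs
  -- Step A : rewrite LHS
  have e1 : t 0 ^ α = (t 0 ^ 2) ^ (α / 2) := by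
    rw [← Real.rpow_natCast (t 0) 2, ← Real.rpow_mul (ht 0)]
    congr 1
    ring
  have e2 : Pr ^ (2 / N - A / ((m : ℝ) + 1)) = (Pr ^ (2 / ((m : ℝ) + 1))) ^ ((2 - α) / 2) := by
    rw [← Real.rpow_mul hPrnn]
    congr 1
    rw [hα, hN]
    have h2 : ((m : ℝ) + 1) ≠ 0 := by positivity
    have h3 : ((m : ℝ) + 2) ≠ 0 := by positivity
    field_simp
    ring
  have hPrpow : (0 : ℝ) ≤ Pr ^ (2 / ((m : ℝ) + 1)) := Real.rpow_nonneg hPrnn _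
  have stepB : (t 0 ^ 2) ^ (α / 2) * (Pr ^ (2 / ((m : ℝ) + 1))) ^ ((2 - α) / 2)
      ≤ t 0 ^ 2 + Pr ^ (2 / ((m : ℝ) + 1)) := by
    calc (t 0 ^ 2) ^ (α / 2) * (Pr ^ (2 / ((m : ℝ) + 1))) ^ ((2 - α) / 2)
        ≤ (α / 2) * (t 0 ^ 2) + ((2 - α) / 2) * (Pr ^ (2 / ((m : ℝ) + 1))) :=
          Real.geom_mean_le_arith_mean2_weighted (by positivity) (by linarith)
            (sq_nonneg _) hPrpow (by ring)
      _ ≤ t 0 ^ 2 + Pr ^ (2 / ((m : ℝ) + 1)) := by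
          have hw1 : (0:ℝ) ≤ 1 - α / 2 := by linarith
          have hw2 : (0:ℝ) ≤ α / 2 := by linarith
          nlinarith [mul_nonneg hw1 (sq_nonneg (t 0)), mul_nonneg hw2 hPrpow]
  calc t 0 ^ (2 / N + A) * Pr ^ (2 / N - A / ((m : ℝ) + 1))
      = (t 0 ^ 2) ^ (α / 2) * (Pr ^ (2 / ((m : ℝ) + 1))) ^ ((2 - α) / 2) := by
        rw [← e1, ← e2, hα]
    _ ≤ t 0 ^ 2 + Pr ^ (2 / ((m : ℝ) + 1)) := stepB
    _ ≤ t 0 ^ 2 + ∑ q ∈ s'.offDiag, t q.1 * t q.2 := by linarith [stepC]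

lemma quad_expand {V : Type*} [AddCommGroup V] [Module ℝ V] (Q : QuadraticForm ℝ V)
    {n : ℕ} (lam : Fin n → V) (t : Fin n → ℝ) :
    Q (∑ i, t i • lam i) * 2 =
      ∑ q ∈ (univ ×ˢ univ : Finset (Fin n × Fin n)),
        t q.1 * t q.2 * QuadraticMap.polar Q (lam q.1) (lam q.2) := by
  have h1 : QuadraticMap.polar Q (∑ i, t i • lam i) (∑ i, t i • lam i)
      = ∑ q ∈ (univ ×ˢ univ : Finset (Fin n × Fin n)),
        t q.1 * t q.2 * QuadraticMap.polar Q (lam q.1) (lam q.2) := by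
    rw [Finset.sum_product]
    rw [← QuadraticMap.polarBilin_apply_apply]
    simp only [map_sum, map_smul, LinearMap.sum_apply, LinearMap.smul_apply,
      QuadraticMap.polarBilin_apply_apply, smul_eq_mul]
    refine Finset.sum_congr rfl fun i _ => ?_
    rw [Finset.mul_sum]
    refine Finset.sum_congr rfl fun j _ => ?_
    rw [QuadraticMap.polar_comm]
    ring
  have h2 := QuadraticMap.polar_self Q (∑ i, t i • lam i)
  rw [h1, two_nsmul] at h2
  linarith [h2.symm]


/-- Same setting as Statement 3, but with the additional hypothesis
`Q λ₀ > 0`; then the conclusion holds for the larger range `0 ≤ A ≤ 2 - 2/n`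
(with `n = m + 2 ≥ 2`). -/
theorem stmt4 {p m : ℕ} (hp : 1 ≤ p) {V : Type*} [NormedAddCommGroup V] [NormedSpace ℝ V]
    [FiniteDimensional ℝ V] (Q : QuadraticForm ℝ V)
    (hsig : Q.Equivalent (QuadraticMap.weightedSumSquares ℝ
      (fun i : Fin p => if (i : ℕ) = 0 then (1 : ℝ) else -1)))
    (v₀ : V) (hv₀ : 0 < Q v₀)
    (lam : Fin (m + 2) → V)
    (hlam : ∀ i, lam i ∈ closure (connectedComponentIn {v : V | 0 < Q v} v₀))
    (hindep : LinearIndependent ℝ lam)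
    (hpos : 0 < Q (lam 0))
    (A : ℝ) (hA0 : 0 ≤ A) (hA1 : A ≤ 2 - 2 / (m + 2 : ℝ)) :
    ∃ c : ℝ, 0 < c ∧ ∀ t : Fin (m + 2) → ℝ, (∀ i, 0 ≤ t i) →
      c * (t 0) ^ (2 / (m + 2 : ℝ) + A) *
        (∏ i ∈ univ.erase 0, t i) ^ (2 / (m + 2 : ℝ) - A / (m + 1 : ℝ))
        ≤ Q (∑ i, t i • lam i) := by
  obtain ⟨hQnn, hPpos⟩ := geometry_facts hp Q hsig v₀ hv₀ lam hlam hindep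
  have h01 : (0 : Fin (m + 2)) ≠ 1 := by
    simp [Fin.ext_iff]
  have hne : ((univ : Finset (Fin (m + 2))).offDiag).Nonempty :=
    ⟨(0, 1), Finset.mem_offDiag.2 ⟨mem_univ _, mem_univ _, h01⟩⟩
  set q0 : ℝ := min (2 * Q (lam 0))
    (Finset.inf' (univ.offDiag) hne
      (fun q : Fin (m + 2) × Fin (m + 2) => QuadraticMap.polar Q (lam q.1) (lam q.2)))
    with hq0
  have hq0pos : 0 < q0 := by
    apply lt_min (by linarith)
    rw [Finset.lt_inf'_iff]
    intro b hb
    exact hPpos b.1 b.2 (Finset.mem_offDiag.1 hb).2.2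
  have hq0l : q0 ≤ 2 * Q (lam 0) := min_le_left _ _
  have hq0le : ∀ i j : Fin (m + 2), i ≠ j →
      q0 ≤ QuadraticMap.polar Q (lam i) (lam j) := by
    intro i j hij
    have hmem : ((i, j) : Fin (m + 2) × Fin (m + 2)) ∈
        (univ : Finset (Fin (m + 2))).offDiag :=
      Finset.mem_offDiag.2 ⟨mem_univ _, mem_univ _, hij⟩
    exact le_trans (min_le_right _ _) (Finset.inf'_le _ hmem)
  refine ⟨q0 / 2, by positivity, ?_⟩
  intro t ht
  have hexp := quad_expand Q lam t
  have hFnn : ∀ q : Fin (m + 2) × Fin (m + 2),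
      0 ≤ t q.1 * t q.2 * QuadraticMap.polar Q (lam q.1) (lam q.2) := by
    intro q
    apply mul_nonneg (mul_nonneg (ht _) (ht _))
    rcases eq_or_ne q.1 q.2 with h | h
    · rw [← h, QuadraticMap.polar_self, two_nsmul]
      linarith [hQnn q.1]
    · exact le_of_lt (hPpos _ _ h)
  have hnm : ((0 : Fin (m + 2)), (0 : Fin (m + 2))) ∉
      (univ : Finset (Fin (m + 2))).offDiag := by
    intro hmem
    exact (Finset.mem_offDiag.1 hmem).2.2 rfl
  have hsub : insert ((0 : Fin (m + 2)), (0 : Fin (m + 2)))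
      (univ : Finset (Fin (m + 2))).offDiag ⊆ univ ×ˢ univ :=
    fun q _ => Finset.mem_product.2 ⟨mem_univ _, mem_univ _⟩
  have hlow : q0 * (t 0 ^ 2) +
      q0 * (∑ q ∈ (univ : Finset (Fin (m + 2))).offDiag, t q.1 * t q.2)
      ≤ Q (∑ i, t i • lam i) * 2 := by
    rw [hexp]
    have h1 : ∑ q ∈ insert ((0 : Fin (m + 2)), (0 : Fin (m + 2)))
          (univ : Finset (Fin (m + 2))).offDiag,
          t q.1 * t q.2 * QuadraticMap.polar Q (lam q.1) (lam q.2)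
        ≤ ∑ q ∈ (univ ×ˢ univ : Finset (Fin (m + 2) × Fin (m + 2))),
          t q.1 * t q.2 * QuadraticMap.polar Q (lam q.1) (lam q.2) :=
      Finset.sum_le_sum_of_subset_of_nonneg hsub (fun q _ _ => hFnn q)
    rw [Finset.sum_insert hnm] at h1
    have h2 : q0 * (t 0 ^ 2) ≤ t 0 * t 0 * QuadraticMap.polar Q (lam 0) (lam 0) := by
      rw [QuadraticMap.polar_self, two_nsmul]
      have ht0 : 0 ≤ t 0 * t 0 := mul_nonneg (ht 0) (ht 0)
      nlinarith [hQnn 0]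
    have h3 : q0 * (∑ q ∈ (univ : Finset (Fin (m + 2))).offDiag, t q.1 * t q.2)
        ≤ ∑ q ∈ (univ : Finset (Fin (m + 2))).offDiag,
            t q.1 * t q.2 * QuadraticMap.polar Q (lam q.1) (lam q.2) := by
      rw [Finset.mul_sum]
      refine Finset.sum_le_sum fun q hq => ?_
      have hqne : q.1 ≠ q.2 := (Finset.mem_offDiag.1 hq).2.2
      have htt : 0 ≤ t q.1 * t q.2 := mul_nonneg (ht _) (ht _)
      calc q0 * (t q.1 * t q.2) = (t q.1 * t q.2) * q0 := by ring
        _ ≤ (t q.1 * t q.2) * QuadraticMap.polar Q (lam q.1) (lam q.2) :=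
            mul_le_mul_of_nonneg_left (hq0le _ _ hqne) htt
        _ = t q.1 * t q.2 * QuadraticMap.polar Q (lam q.1) (lam q.2) := rfl
    linarith
  rcases Nat.eq_zero_or_pos m with hm | hm
  · subst hm
    have e1 : 2 / (((0 : ℕ) : ℝ) + 2) + A = 1 + A := by norm_num
    have e2 : 2 / (((0 : ℕ) : ℝ) + 2) - A / (((0 : ℕ) : ℝ) + 1) = 1 - A := by norm_num
    rw [e1, e2]
    have hA1' : A ≤ 1 := by
      norm_num at hA1
      linarith
    have hps : (univ.erase (0 : Fin (0 + 2))) = {1} := by decide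
    rw [hps, Finset.prod_singleton]
    have hbig2 := amgm2 hA0 hA1' (ht 0) (ht 1)
    have hoff : (univ : Finset (Fin (0 + 2))).offDiag =
        {((0 : Fin (0 + 2)), (1 : Fin (0 + 2))), ((1 : Fin (0 + 2)), (0 : Fin (0 + 2)))} := by
      decide
    rw [hoff, Finset.sum_insert (by decide), Finset.sum_singleton] at hlow
    calc q0 / 2 * t 0 ^ (1 + A) * t 1 ^ (1 - A)
        = q0 / 2 * (t 0 ^ (1 + A) * t 1 ^ (1 - A)) := by ring
      _ ≤ q0 / 2 * (t 0 ^ 2 + t 0 * t 1) :=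
          mul_le_mul_of_nonneg_left hbig2 (by positivity)
      _ ≤ Q (∑ i, t i • lam i) := by
          nlinarith [hlow, mul_nonneg (mul_nonneg hq0pos.le (ht 1)) (ht 0)]
  · have hbig := amgm_big hm hA0 hA1 t ht
    have hsub2 : ((univ.erase (0 : Fin (m + 2))).offDiag : Finset (Fin (m+2) × Fin (m+2)))
        ⊆ (univ : Finset (Fin (m + 2))).offDiag := by
      intro q hq
      exact Finset.mem_offDiag.2 ⟨mem_univ _, mem_univ _, (Finset.mem_offDiag.1 hq).2.2⟩
    have hSS : ∑ q ∈ (univ.erase (0 : Fin (m + 2))).offDiag, t q.1 * t q.2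
        ≤ ∑ q ∈ (univ : Finset (Fin (m + 2))).offDiag, t q.1 * t q.2 :=
      Finset.sum_le_sum_of_subset_of_nonneg hsub2
        (fun q _ _ => mul_nonneg (ht _) (ht _))
    have hmul := mul_le_mul_of_nonneg_left hSS (by positivity : (0:ℝ) ≤ q0 / 2)
    calc q0 / 2 * t 0 ^ (2 / (↑m + 2) + A) *
          (∏ i ∈ univ.erase 0, t i) ^ (2 / (↑m + 2) - A / (↑m + 1))
        = q0 / 2 * (t 0 ^ (2 / (↑m + 2) + A) *
          (∏ i ∈ univ.erase 0, t i) ^ (2 / (↑m + 2) - A / (↑m + 1))) := by ring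
      _ ≤ q0 / 2 * (t 0 ^ 2 +
            ∑ q ∈ (univ.erase (0 : Fin (m + 2))).offDiag, t q.1 * t q.2) :=
          mul_le_mul_of_nonneg_left hbig (by positivity)
      _ ≤ Q (∑ i, t i • lam i) := by
          linarith
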